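/- Given a finite strictly increasing sequence m₀ < m₁ < ⋯ < m_n of nonnegative integers with gaps exactly after m_{i₁} > ⋯ > m_{i_s}, set β_j = m_{i_j}+1 and ℓ_j = m_{i_j} - i_j, let B = ⊕_{j=1}^s Λ/(p^{β_j}) with generators b_{β_j}, and a = Σ_j p^{ℓ_j} b_{β_j}. Then the height sequence of a in B is exactly (m₀, m₁, …, m_n, ∞, ∞, …). -/

import Mathlib

/-- `b` lies in `p^m B`, i.e. the height of `b` is at least `m`. -/
def inPow {Λ B : Type} [CommRing Λ] [AddCommGroup B] [Module Λ B]
    (p : Λ) (m : ℕ) (b : B) : Prop := ∃ c, b = p ^ m • c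

/-- The height of `b` is exactly `m`: `b ∈ p^m B \ p^{m+1} B`. -/
def heightIs {Λ B : Type} [CommRing Λ] [AddCommGroup B] [Module Λ B]
    (p : Λ) (b : B) (m : ℕ) : Prop := inPow p m b ∧ ¬ inPow p (m + 1) b


section Aux

variable {Λ : Type} [CommRing Λ] [IsDomain Λ] [IsDiscreteValuationRing Λ]
variable {p : Λ}

omit [IsDiscreteValuationRing Λ] in
lemma aux_pow_mem_span_pow_iff (hp : Irreducible p) {u t : ℕ} :
    p ^ t ∈ Ideal.span {p ^ u} ↔ u ≤ t := by
  rw [Ideal.mem_span_singleton]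
  exact pow_dvd_pow_iff hp.ne_zero hp.not_isUnit

omit [IsDomain Λ] [IsDiscreteValuationRing Λ] in
lemma aux_mk_smul {β : ℕ} (r x : Λ) :
    r • (Ideal.Quotient.mk (Ideal.span {p ^ β}) x)
      = Ideal.Quotient.mk (Ideal.span {p ^ β}) (r * x) := by
  rw [Algebra.smul_def, Ideal.Quotient.algebraMap_eq, ← map_mul]

omit [IsDiscreteValuationRing Λ] in
lemma aux_inPow_mk_pow_iff (hp : Irreducible p) {β k t : ℕ} :
    inPow p k (Ideal.Quotient.mk (Ideal.span {p ^ β}) (p ^ t)) ↔ min k β ≤ t := by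
  constructor
  · rintro ⟨c, hc⟩
    by_contra h
    push_neg at h
    obtain ⟨c', rfl⟩ := Ideal.Quotient.mk_surjective c
    rw [aux_mk_smul, Ideal.Quotient.mk_eq_mk_iff_sub_mem, Ideal.mem_span_singleton] at hc
    obtain ⟨d, hd⟩ := hc
    have h1 : p ^ (t + 1) ∣ p ^ t := by
      have hk : p ^ (t + 1) ∣ p ^ k * c' :=
        Dvd.dvd.mul_right (pow_dvd_pow p (by omega)) _
      have hb : p ^ (t + 1) ∣ p ^ β * d :=
        Dvd.dvd.mul_right (pow_dvd_pow p (by omega)) _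
      have h2 : p ^ t = p ^ k * c' + p ^ β * d := by linear_combination hd
      rw [h2]
      exact dvd_add hk hb
    rw [pow_dvd_pow_iff hp.ne_zero hp.not_isUnit] at h1
    omega
  · intro h
    rcases le_or_gt k t with hk | hk
    · refine ⟨Ideal.Quotient.mk _ (p ^ (t - k)), ?_⟩
      have ht : t = k + (t - k) := by omega
      rw [aux_mk_smul, ← pow_add, ← ht]
    · have hb : β ≤ t := by omega
      refine ⟨0, ?_⟩
      rw [smul_zero, Ideal.Quotient.eq_zero_iff_mem,
        aux_pow_mem_span_pow_iff hp]
      exact hb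

end Aux

/-- Kaplansky's construction: given a strictly increasing sequence
`m 0 < m 1 < ⋯ < m n` of nonnegative integers, with gaps exactly after the
entries `m (idx 1) > ⋯ > m (idx s)` (a gap occurs after position `ℓ ≤ n` iff
`ℓ = n` or `m (ℓ+1) > m ℓ + 1`), set `β j = m (idx j) + 1`,
`ℓ_j = m (idx j) - idx j`, `B = ⊕_j Λ/(p^{β j})` and
`a = Σ_j p^{ℓ_j} b_{β_j}`.  Then the height sequence of `a` in `B` is exactly
`(m 0, …, m n, ∞, ∞, …)`. -/
theorem stmt3 (Λ : Type) [CommRing Λ] [IsDomain Λ] [IsDiscreteValuationRing Λ]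
    (p : Λ) (hp : Irreducible p)
    (n s : ℕ) (m : ℕ → ℕ) (hm : StrictMono m)
    (idx : Fin s → ℕ) (hanti : StrictAnti idx) (hle : ∀ j, idx j ≤ n)
    (hgaps : ∀ ℓ ≤ n, (ℓ = n ∨ m ℓ + 1 < m (ℓ + 1)) ↔ ∃ j, idx j = ℓ)
    (a : ∀ j : Fin s, Λ ⧸ Ideal.span {p ^ (m (idx j) + 1)})
    (ha : a = fun j => Ideal.Quotient.mk (Ideal.span {p ^ (m (idx j) + 1)})
      (p ^ (m (idx j) - idx j))) :
    (∀ i ≤ n, heightIs p (p ^ i • a) (m i)) ∧ p ^ (n + 1) • a = 0 := by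

  subst ha
  have hmge : ∀ k, k ≤ m k := fun k => hm.le_apply
  have hadd : ∀ i k, i ≤ k → m i + k ≤ m k + i := by
    intro i k hik
    induction k, hik using Nat.le_induction with
    | base => omega
    | succ k hk ih => have := hm (by omega : k < k + 1); omega
  have key : ∀ d i, i ≤ n → n - i ≤ d →
      ∃ j : Fin s, i ≤ idx j ∧ m (idx j) + i = m i + idx j := by
    intro d
    induction d with
    | zero =>
      intro i hin hd
      have hi : i = n := by omega
      obtain ⟨j, hj⟩ := (hgaps n le_rfl).mp (Or.inl rfl)
      exact ⟨j, by omega, by rw [hj, hi]⟩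
    | succ d ih =>
      intro i hin hd
      by_cases hex : ∃ j, idx j = i
      · obtain ⟨j, hj⟩ := hex
        exact ⟨j, hj.ge, by rw [hj]⟩
      · have hng : ¬ (i = n ∨ m i + 1 < m (i + 1)) :=
          fun h => hex ((hgaps i hin).mp h)
        push_neg at hng
        have h1 : m i < m (i + 1) := hm (Nat.lt_succ_self i)
        obtain ⟨j, hj1, hj2⟩ := ih (i + 1) (by omega) (by omega)
        exact ⟨j, by omega, by omega⟩
  have hcomp : ∀ (i : ℕ) (j : Fin s),
      (p ^ i • (fun j => Ideal.Quotient.mk (Ideal.span {p ^ (m (idx j) + 1)})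
        (p ^ (m (idx j) - idx j)))) j
      = Ideal.Quotient.mk (Ideal.span {p ^ (m (idx j) + 1)})
        (p ^ (i + (m (idx j) - idx j))) := by
    intro i j
    rw [Pi.smul_apply, aux_mk_smul, ← pow_add]
  constructor
  · intro i hi
    constructor
    · have h : ∀ j : Fin s, ∃ c,
          (p ^ i • (fun j => Ideal.Quotient.mk (Ideal.span {p ^ (m (idx j) + 1)})
            (p ^ (m (idx j) - idx j)))) j = p ^ (m i) • c := by
        intro j
        rw [hcomp]
        rw [show (∃ c, Ideal.Quotient.mk (Ideal.span {p ^ (m (idx j) + 1)})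
          (p ^ (i + (m (idx j) - idx j))) = p ^ (m i) • c)
          = inPow p (m i) (Ideal.Quotient.mk (Ideal.span {p ^ (m (idx j) + 1)})
          (p ^ (i + (m (idx j) - idx j)))) from rfl, aux_inPow_mk_pow_iff hp]
        rcases le_or_gt i (idx j) with h' | h'
        · have := hadd i (idx j) h'
          have := hmge (idx j)
          omega
        · have := hmge (idx j)
          omega
      choose c hc using h
      exact ⟨c, funext fun j => by rw [Pi.smul_apply]; exact hc j⟩
    · rintro ⟨c, hc⟩
      obtain ⟨j, hj1, hj2⟩ := key n i hi (by omega)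
      have hcj : inPow p (m i + 1)
          ((p ^ i • (fun j => Ideal.Quotient.mk (Ideal.span {p ^ (m (idx j) + 1)})
            (p ^ (m (idx j) - idx j)))) j) :=
        ⟨c j, by rw [hc, Pi.smul_apply]⟩
      rw [hcomp, aux_inPow_mk_pow_iff hp] at hcj
      have := hmge (idx j)
      omega
  · funext j
    rw [Pi.zero_apply, hcomp, Ideal.Quotient.eq_zero_iff_mem,
      aux_pow_mem_span_pow_iff hp]
    have := hmge (idx j)
    have := hle j
    omega
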